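/- Let P₁,...,P_m ⊂ ℝ^d be point sets, and suppose each C_i ⊆ P_i is an α-approximate core-set for the k-directional height of P_i. Then MAXDET_k(⋃ P_i) ≤ α^{2k} · MAXDET_k(⋃ C_i). -/

import Mathlib

abbrev Pt (d : ℕ) := EuclideanSpace ℝ (Fin d)

/-- Determinant of the Gram matrix of `v 0, …, v (k-1)`; equals `VOL(v)²`. -/
noncomputable def gramDet {d k : ℕ} (v : Fin k → Pt d) : ℝ :=
  Matrix.det (Matrix.of fun i j => (inner ℝ (v i) (v j) : ℝ))

/-- `MAXDET_k(Q)`: the maximum Gram determinant over size-`k` subsets of `Q`. -/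
noncomputable def maxdet {d : ℕ} (k : ℕ) (Q : Set (Pt d)) : ℝ :=
  sSup {x | ∃ S : Fin k → Pt d, Function.Injective S ∧ Set.range S ⊆ Q ∧ x = gramDet S}

/-- The `k`-directional height of `P` with respect to `H`:
the largest distance of a point of `P` from `H`. -/
noncomputable def dirHeight {d : ℕ} (P : Set (Pt d)) (H : Submodule ℝ (Pt d)) : ℝ :=
  ⨆ p ∈ P, Metric.infDist p (H : Set (Pt d))

section CSAux
open Matrix Function Metric
variable {d k : ℕ}

noncomputable def gmat (v : Fin k → Pt d) : Matrix (Fin k) (Fin k) ℝ :=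
  Matrix.of fun i j => (inner ℝ (v i) (v j) : ℝ)
lemma gramDet_eq (v : Fin k → Pt d) : gramDet v = (gmat v).det := rfl

lemma gmat_eq_mul (v : Fin k → Pt d) :
    gmat v = (Matrix.of fun i x => v i x) * (Matrix.of fun i x => v i x)ᵀ := by
  ext a b
  simp [gmat, Matrix.mul_apply, PiLp.inner_apply, RCLike.inner_apply, starRingEnd_apply, mul_comm]

lemma gramDet_nonneg (v : Fin k → Pt d) : 0 ≤ gramDet v := by
  rw [gramDet_eq, gmat_eq_mul]
  set M : Matrix (Fin k) (Fin d) ℝ := Matrix.of fun i x => v i x with hM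
  have h : (M * Mᵀ).PosSemidef := by
    have := Matrix.posSemidef_self_mul_conjTranspose M
    simpa [Matrix.conjTranspose_eq_transpose_of_trivial] using this
  rw [h.isHermitian.det_eq_prod_eigenvalues]
  exact Finset.prod_nonneg fun i _ => by exact_mod_cast h.eigenvalues_nonneg i

lemma gramDet_update_add_smul (v : Fin k → Pt d) {i j : Fin k} (hij : i ≠ j) (c : ℝ) :
    gramDet (Function.update v j (v j + c • v i)) = gramDet v := by
  have hgm : gmat (Function.update v j (v j + c • v i)) =
      Matrix.updateCol ((gmat v).updateRow j ((gmat v) j + c • (gmat v) i)) j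
        (fun a => ((gmat v).updateRow j ((gmat v) j + c • (gmat v) i)) a j
          + c • ((gmat v).updateRow j ((gmat v) j + c • (gmat v) i)) a i) := by
    ext a b
    simp only [gmat, Matrix.of_apply, Matrix.updateCol_apply, Matrix.updateRow_apply,
      Function.update_apply, Pi.add_apply, Pi.smul_apply, smul_eq_mul]
    split_ifs <;>
      (try simp only [inner_add_left, inner_add_right, real_inner_smul_left,
        real_inner_smul_right, smul_eq_mul]) <;>
      (try simp only [real_inner_comm (v i)]) <;> first | rfl | ring
  rw [gramDet_eq, gramDet_eq, hgm,
    Matrix.det_updateCol_add_smul_self _ hij.symm,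
    Matrix.det_updateRow_add_smul_self _ hij.symm]

lemma gramDet_update_sub_sum (v : Fin k → Pt d) (j : Fin k) (T : Finset (Fin k))
    (hT : j ∉ T) (c : Fin k → ℝ) :
    gramDet (Function.update v j (v j - ∑ i ∈ T, c i • v i)) = gramDet v := by
  induction T using Finset.induction_on with
  | empty => simp
  | @insert a T ha ih =>
      have haj : a ≠ j := fun h => hT (h ▸ Finset.mem_insert_self a T)
      have hjT : j ∉ T := fun h => hT (Finset.mem_insert_of_mem h)
      set w := Function.update v j (v j - ∑ i ∈ T, c i • v i) with hw
      have h1 : Function.update v j (v j - ∑ i ∈ insert a T, c i • v i)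
          = Function.update w j (w j + (-(c a)) • w a) := by
        rw [hw]
        ext x y
        rcases eq_or_ne x j with rfl | hx
        · simp [Function.update_self, Function.update_of_ne haj,
            Finset.sum_insert ha]
          ring_nf
        · simp [Function.update_of_ne hx]
      rw [h1, gramDet_update_add_smul w haj (-(c a))]
      exact ih hjT

noncomputable def bmat (v : Fin k → Pt d) (j : Fin k) : Matrix (Fin k) (Fin k) ℝ :=
  Matrix.of fun a b => if a = j then (if b = j then 1 else 0)
    else if b = j then 0 else (inner ℝ (v a) (v b) : ℝ)

lemma gramDet_update_perp (v : Fin k → Pt d) (j : Fin k) (h : Pt d)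
    (hperp : ∀ i, i ≠ j → (inner ℝ (v i) h : ℝ) = 0) :
    gramDet (Function.update v j h) = ‖h‖^2 * (bmat v j).det := by
  have hgm : gmat (Function.update v j h) =
      (bmat v j).updateRow j ((‖h‖^2 : ℝ) • (bmat v j) j) := by
    ext a b
    by_cases ha : a = j
    · subst ha
      by_cases hb : b = a
      · subst hb
        have hnorm : (inner ℝ h h : ℝ) = ‖h‖^2 := real_inner_self_eq_norm_sq h
        simp only [gmat, Matrix.of_apply, Function.update_self, hnorm,
          Matrix.updateRow_self, Pi.smul_apply, smul_eq_mul, bmat]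
        simp
      · have h2 : (inner ℝ h (v b) : ℝ) = 0 := by
          rw [real_inner_comm]; exact hperp b hb
        simp only [gmat, Matrix.of_apply, Function.update_self, Function.update_of_ne hb,
          Matrix.updateRow_self, Pi.smul_apply, smul_eq_mul, bmat, h2]
        simp [hb]
    · by_cases hb : b = j
      · subst hb
        simp only [gmat, Matrix.of_apply, Function.update_self, Function.update_of_ne ha,
          Matrix.updateRow_apply, Pi.smul_apply, smul_eq_mul, bmat, hperp a ha,
          Matrix.of_apply, if_neg ha]
        simp
      · simp only [gmat, Matrix.of_apply, Function.update_of_ne ha, Function.update_of_ne hb,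
          Matrix.updateRow_apply, Pi.smul_apply, smul_eq_mul, bmat, if_neg ha, if_neg hb]
  rw [gramDet_eq, hgm, Matrix.det_updateRow_smul, Matrix.updateRow_eq_self]

/-- span of the other points -/
noncomputable def Hs (v : Fin k → Pt d) (j : Fin k) : Submodule ℝ (Pt d) :=
  Submodule.span ℝ (v '' {i | i ≠ j})

instance (v : Fin k → Pt d) (j : Fin k) : FiniteDimensional ℝ (Hs v j) :=
  FiniteDimensional.span_of_finite ℝ ((Set.toFinite _).image v)

lemma height_formula (v : Fin k → Pt d) (j : Fin k) :
    gramDet v = (Metric.infDist (v j) (Hs v j : Set (Pt d)))^2 * (bmat v j).det := by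
  haveI : Submodule.HasOrthogonalProjection (Hs v j) := inferInstance
  set K := Hs v j with hK
  set p : Pt d := (Submodule.orthogonalProjectionOnto K (v j) : Pt d) with hp
  have hpmem : p ∈ K := (Submodule.orthogonalProjectionOnto K (v j)).2
  -- express p as a finite combination of the other points
  have hmem : p ∈ Submodule.span ℝ (Set.range (fun i : ↥{i : Fin k | i ≠ j} => v ↑i)) := by
    rw [← Set.image_eq_range]; exact hpmem
  obtain ⟨c, hc⟩ := Submodule.mem_span_range_iff_exists_fun ℝ |>.mp hmem
  set c' : Fin k → ℝ := fun i => if hi : i = j then 0 else c ⟨i, hi⟩ with hc'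
  have hsum : ∑ i ∈ Finset.univ.erase j, c' i • v i = p := by
    rw [Finset.sum_subtype (p := fun i => i ∈ {i : Fin k | i ≠ j}) (Finset.univ.erase j)
      (by intro x; simp [Finset.mem_erase]) (fun i => c' i • v i)]
    rw [← hc]
    refine Finset.sum_congr rfl fun i _ => ?_
    have hij : (i : Fin k) ≠ j := i.2
    simp [hc', hij]
  set h : Pt d := v j - p with hh
  have hupdate : Function.update v j (v j - ∑ i ∈ Finset.univ.erase j, c' i • v i)
      = Function.update v j h := by rw [hsum]
  have hperp : ∀ i, i ≠ j → (inner ℝ (v i) h : ℝ) = 0 := by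
    intro i hi
    have hmemK : v i ∈ K := Submodule.subset_span ⟨i, hi, rfl⟩
    have horth : h ∈ Kᗮ := Submodule.sub_starProjection_mem_orthogonal (K := K) (v j)
    exact (Submodule.mem_orthogonal K h).mp horth (v i) hmemK
  have hdist : ‖h‖ = Metric.infDist (v j) (K : Set (Pt d)) := by
    rw [hh, hp, ← Submodule.starProjection_apply, Submodule.starProjection_minimal, Metric.infDist_eq_iInf]
    simp only [dist_eq_norm]
    rfl
  calc gramDet v
      = gramDet (Function.update v j (v j - ∑ i ∈ Finset.univ.erase j, c' i • v i)) :=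
        (gramDet_update_sub_sum v j _ (Finset.notMem_erase j _) c').symm
    _ = gramDet (Function.update v j h) := by rw [hupdate]
    _ = ‖h‖^2 * (bmat v j).det := gramDet_update_perp v j h hperp
    _ = (Metric.infDist (v j) (K : Set (Pt d)))^2 * (bmat v j).det := by rw [hdist]

lemma bmat_update (v : Fin k → Pt d) (j : Fin k) (c : Pt d) :
    bmat (Function.update v j c) j = bmat v j := by
  ext a b
  by_cases ha : a = j <;> by_cases hb : b = j <;>
    simp [bmat, ha, hb, Function.update_of_ne, Function.update_of_ne]

lemma Hs_update (v : Fin k → Pt d) (j : Fin k) (c : Pt d) :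
    Hs (Function.update v j c) j = Hs v j := by
  unfold Hs
  congr 1
  apply Set.image_congr
  intro x hx
  exact Function.update_of_ne hx c v

lemma swap_ineq (v : Fin k → Pt d) (j : Fin k) (c : Pt d) {α : ℝ} (hα : 0 ≤ α)
    (hd : Metric.infDist (v j) (Hs v j : Set (Pt d))
      ≤ α * Metric.infDist c (Hs v j : Set (Pt d))) :
    gramDet v ≤ α^2 * gramDet (Function.update v j c) := by
  have h1 := height_formula v j
  have h2 := height_formula (Function.update v j c) j
  rw [Hs_update, bmat_update, Function.update_self] at h2
  set dv := Metric.infDist (v j) (Hs v j : Set (Pt d)) with hdv'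
  set dc := Metric.infDist c (Hs v j : Set (Pt d)) with hdc'
  set B := (bmat v j).det with hB'
  have hdv : 0 ≤ dv := Metric.infDist_nonneg
  have hdc : 0 ≤ dc := Metric.infDist_nonneg
  have hg2 : 0 ≤ gramDet (Function.update v j c) := gramDet_nonneg _
  rcases eq_or_lt_of_le hdc with h0 | h0
  · have hdv0 : dv = 0 := le_antisymm (by nlinarith) hdv
    rw [h1, hdv0]
    simpa using mul_nonneg (sq_nonneg α) hg2
  · have hB : 0 ≤ B := by
      by_contra hB
      push_neg at hB
      rw [h2] at hg2
      nlinarith [mul_pos h0 h0]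
    rw [h1, h2]
    have hsq : dv^2 ≤ α^2 * dc^2 := by nlinarith
    nlinarith [mul_le_mul_of_nonneg_right hsq hB]

lemma gramDet_eq_zero_of_not_li {v : Fin k → Pt d} (hli : ¬ LinearIndependent ℝ v) :
    gramDet v = 0 := by
  rw [linearIndependent_iff_notMem_span] at hli
  push_neg at hli
  obtain ⟨j, hj⟩ := hli
  have hset : v '' (Set.univ \ {j}) = v '' {i | i ≠ j} := by
    congr 1
    ext i
    simp
  have hmem : v j ∈ Hs v j := by rw [Hs, ← hset]; exact hj
  rw [height_formula v j, Metric.infDist_zero_of_mem hmem]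
  ring

lemma finrank_Hs {v : Fin k → Pt d} (hli : LinearIndependent ℝ v) (j : Fin k) :
    Module.finrank ℝ (Hs v j) = k - 1 := by
  have hres : LinearIndependent ℝ (fun i : ↥{i : Fin k | i ≠ j} => v ↑i) :=
    hli.comp _ Subtype.val_injective
  have : Hs v j = Submodule.span ℝ (Set.range fun i : ↥{i : Fin k | i ≠ j} => v ↑i) := by
    rw [Hs, Set.image_eq_range]
  rw [this, finrank_span_eq_card hres]
  simp [Fintype.card_subtype_compl, Finset.filter_ne']

lemma dirHeight_le' {P : Set (Pt d)} {H : Submodule ℝ (Pt d)} {B : ℝ} (hB : 0 ≤ B)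
    (h : ∀ p ∈ P, Metric.infDist p (H : Set (Pt d)) ≤ B) : dirHeight P H ≤ B :=
  Real.iSup_le (fun p => Real.iSup_le (h p) hB) hB

lemma le_dirHeight {P : Set (Pt d)} (hP : P.Finite) {x : Pt d} (hx : x ∈ P)
    (H : Submodule ℝ (Pt d)) : Metric.infDist x (H : Set (Pt d)) ≤ dirHeight P H := by
  obtain ⟨B, hB⟩ := (hP.image (fun p => Metric.infDist p (H : Set (Pt d)))).bddAbove
  have hbd : ∀ p ∈ P, Metric.infDist p (H : Set (Pt d)) ≤ B := fun p hp =>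
    hB ⟨p, hp, rfl⟩
  have hbdd : BddAbove (Set.range fun p =>
      ⨆ _ : p ∈ P, Metric.infDist p (H : Set (Pt d))) := by
    refine ⟨max B 0, ?_⟩
    rintro y ⟨p, rfl⟩
    exact Real.iSup_le (fun hp => le_max_of_le_left (hbd p hp)) (le_max_right _ _)
  have := le_ciSup hbdd x
  rwa [ciSup_pos hx] at this

end CSAux

/-- If each `C i ⊆ P i` is an `α`-approximate core-set for the `k`-directional height
of `P i`, then `MAXDET_k(⋃ P i) ≤ α^{2k} · MAXDET_k(⋃ C i)`. -/
theorem dirHeight_coreset_maxdet {d m k : ℕ} (hk : 1 ≤ k) (α : ℝ) (hα : 1 ≤ α)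
    (P C : Fin m → Set (Pt d))
    (hfin : ∀ i, (P i).Finite) (hsub : ∀ i, C i ⊆ P i)
    (hcore : ∀ i, ∀ H : Submodule ℝ (Pt d), Module.finrank ℝ H = k - 1 →
      dirHeight (P i) H ≤ α * dirHeight (C i) H) :
    maxdet k (⋃ i, P i) ≤ α ^ (2 * k) * maxdet k (⋃ i, C i) := by
  have hα0 : (0:ℝ) ≤ α := by linarith
  set Q : Set (Pt d) := ⋃ i, P i with hQ
  set QC : Set (Pt d) := ⋃ i, C i with hQC
  have hQCfin : QC.Finite := Set.finite_iUnion fun i => (hfin i).subset (hsub i)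
  set SC : Set ℝ := {x | ∃ S : Fin k → Pt d, Function.Injective S ∧
    Set.range S ⊆ QC ∧ x = gramDet S} with hSC
  have hSCfin : SC.Finite := by
    apply Set.Finite.subset (Set.Finite.image gramDet
      ((Set.Finite.pi (fun _ : Fin k => hQCfin)).subset
        (subset_refl _)))
    rintro x ⟨S, _, hr, rfl⟩
    exact ⟨S, fun i _ => hr ⟨i, rfl⟩, rfl⟩
  have hSCbdd : BddAbove SC := hSCfin.bddAbove
  have hmaxC : maxdet k QC = sSup SC := rfl
  have hmaxCnonneg : 0 ≤ maxdet k QC := by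
    rcases Set.eq_empty_or_nonempty SC with he | ⟨x, hx⟩
    · rw [hmaxC, he, Real.sSup_empty]
    · obtain ⟨S, _, _, rfl⟩ := hx
      exact (gramDet_nonneg S).trans (le_csSup hSCbdd ⟨S, ‹_›, ‹_›, rfl⟩)
  classical
  have key : ∀ n : ℕ, ∀ S : Fin k → Pt d, Function.Injective S → Set.range S ⊆ Q →
      (Finset.univ.filter (fun i => S i ∉ QC)).card ≤ n →
      gramDet S ≤ α ^ (2*n) * maxdet k QC := by
    intro n
    induction n with
    | zero =>
      intro S hinj hrange hcard
      have hall : ∀ i, S i ∈ QC := by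
        intro i
        by_contra h
        have : i ∈ Finset.univ.filter (fun i => S i ∉ QC) :=
          Finset.mem_filter.mpr ⟨Finset.mem_univ i, h⟩
        have := Finset.card_pos.mpr ⟨i, this⟩
        omega
      have hmem : gramDet S ∈ SC := ⟨S, hinj, by rintro x ⟨i, rfl⟩; exact hall i, rfl⟩
      simpa [hmaxC] using le_csSup hSCbdd hmem
    | succ n ih =>
      intro S hinj hrange hcard
      by_cases hle : (Finset.univ.filter (fun i => S i ∉ QC)).card ≤ n
      · refine (ih S hinj hrange hle).trans ?_
        have : α ^ (2*n) ≤ α ^ (2*(n+1)) := pow_le_pow_right₀ hα (by omega)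
        exact mul_le_mul_of_nonneg_right this hmaxCnonneg
      · obtain ⟨j, hj⟩ : ∃ j, S j ∉ QC := by
          have : (Finset.univ.filter (fun i => S i ∉ QC)).Nonempty :=
            Finset.card_pos.mp (by omega)
          obtain ⟨j, hjmem⟩ := this
          exact ⟨j, (Finset.mem_filter.mp hjmem).2⟩
        by_cases hli : LinearIndependent ℝ S
        · set H := Hs S j with hH
          have hrk : Module.finrank ℝ H = k - 1 := finrank_Hs hli j
          have hnotmem : S j ∉ H := by
            have := linearIndependent_iff_notMem_span.mp hli j
            intro hmem
            apply this
            have hset : S '' (Set.univ \ {j}) = S '' {i | i ≠ j} := by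
              congr 1; ext i; simp
            rw [hset]
            exact hmem
          have hdv : 0 < Metric.infDist (S j) (H : Set (Pt d)) := by
            rw [← (H.closed_of_finiteDimensional).notMem_iff_infDist_pos ⟨0, H.zero_mem⟩]
            exact hnotmem
          obtain ⟨i₀, hi₀⟩ : ∃ i₀, S j ∈ P i₀ :=
            Set.mem_iUnion.mp (hrange ⟨j, rfl⟩)
          have h1 : Metric.infDist (S j) (H : Set (Pt d)) ≤ dirHeight (P i₀) H :=
            le_dirHeight (hfin i₀) hi₀ H
          have h2 := hcore i₀ H hrk
          have hCne : (C i₀).Nonempty := by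
            rcases Set.eq_empty_or_nonempty (C i₀) with he | hne
            · exfalso
              have hzero : dirHeight (C i₀) H ≤ 0 :=
                dirHeight_le' le_rfl (by rw [he]; rintro p ⟨⟩)
              nlinarith
            · exact hne
          obtain ⟨c, hcC, hcmax⟩ := Set.exists_max_image (C i₀)
            (fun p => Metric.infDist p (H : Set (Pt d)))
            ((hfin i₀).subset (hsub i₀)) hCne
          have h3 : dirHeight (C i₀) H ≤ Metric.infDist c (H : Set (Pt d)) :=
            dirHeight_le' Metric.infDist_nonneg hcmax
          have hd : Metric.infDist (S j) (H : Set (Pt d))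
              ≤ α * Metric.infDist c (H : Set (Pt d)) :=
            h1.trans (h2.trans (mul_le_mul_of_nonneg_left h3 hα0))
          set S' := Function.update S j c with hS'
          have hcQC : c ∈ QC := Set.mem_iUnion.mpr ⟨i₀, hcC⟩
          have hcnotH : c ∉ H := by
            intro hc
            rw [Metric.infDist_zero_of_mem hc] at hd
            nlinarith
          have hSmemH : ∀ i, i ≠ j → S i ∈ H := fun i hi =>
            Submodule.subset_span ⟨i, hi, rfl⟩
          have hinj' : Function.Injective S' := by
            intro a b hab
            by_cases ha : a = j <;> by_cases hb : b = j
            · rw [ha, hb]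
            · exfalso
              rw [hS'] at hab
              rw [ha] at hab
              rw [Function.update_self, Function.update_of_ne hb] at hab
              exact hcnotH (hab ▸ hSmemH b hb)
            · exfalso
              rw [hS'] at hab
              rw [hb] at hab
              rw [Function.update_self, Function.update_of_ne ha] at hab
              exact hcnotH (hab ▸ hSmemH a ha)
            · rw [hS', Function.update_of_ne ha, Function.update_of_ne hb] at hab
              exact hinj hab
          have hrange' : Set.range S' ⊆ Q := by
            rintro x ⟨i, rfl⟩
            by_cases hi : i = j
            · rw [hS', hi, Function.update_self]
              exact Set.mem_iUnion.mpr ⟨i₀, hsub i₀ hcC⟩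
            · rw [hS', Function.update_of_ne hi]
              exact hrange ⟨i, rfl⟩
          have hcard' : (Finset.univ.filter (fun i => S' i ∉ QC)).card ≤ n := by
            have hsubF : Finset.univ.filter (fun i => S' i ∉ QC)
                ⊆ (Finset.univ.filter (fun i => S i ∉ QC)).erase j := by
              intro i hi
              obtain ⟨-, hi2⟩ := Finset.mem_filter.mp hi
              have hij : i ≠ j := by
                intro h
                apply hi2
                rw [h, hS', Function.update_self]
                exact hcQC
              refine Finset.mem_erase.mpr ⟨hij, Finset.mem_filter.mpr ⟨Finset.mem_univ i, ?_⟩⟩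
              rwa [hS', Function.update_of_ne hij] at hi2
            have hjmem : j ∈ Finset.univ.filter (fun i => S i ∉ QC) :=
              Finset.mem_filter.mpr ⟨Finset.mem_univ j, hj⟩
            have := Finset.card_le_card hsubF
            rw [Finset.card_erase_of_mem hjmem] at this
            omega
          have hswap : gramDet S ≤ α^2 * gramDet S' := swap_ineq S j c hα0 hd
          have hIH := ih S' hinj' hrange' hcard'
          calc gramDet S ≤ α^2 * gramDet S' := hswap
            _ ≤ α^2 * (α^(2*n) * maxdet k QC) :=
                mul_le_mul_of_nonneg_left hIH (sq_nonneg α)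
            _ = α^(2*(n+1)) * maxdet k QC := by ring
        · rw [gramDet_eq_zero_of_not_li hli]
          exact mul_nonneg (pow_nonneg hα0 _) hmaxCnonneg
  rcases Set.eq_empty_or_nonempty {x | ∃ S : Fin k → Pt d, Function.Injective S ∧
      Set.range S ⊆ Q ∧ x = gramDet S} with he | hne
  · rw [maxdet, ← hQ] at *
    rw [he, Real.sSup_empty]
    exact mul_nonneg (pow_nonneg hα0 _) hmaxCnonneg
  · rw [maxdet]
    refine csSup_le hne ?_
    rintro x ⟨S, hinj, hrange, rfl⟩
    exact key k S hinj hrange ((Finset.card_filter_le _ _).trans (by simp))
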